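/- Let H be a Hopf algebra with coproduct Δ, ρ : H → S ⊗ H a coaction satisfying the cointeraction m^{1,3}(ρ ⊗ ρ)Δ = (id ⊗ Δ)ρ with S a commutative bialgebra, ℓ : S → k a character, and M_ℓ := (ℓ ⊗ id)ρ. Let (X_{st}) be characters of H satisfying Chen's identity X_{su} ∗ X_{ut} = X_{st}. Define Γ^ℓ_{st} := (X_{ts} ∘ M_ℓ ⊗ id)Δ. Then Γ^ℓ_{xy} Γ^ℓ_{yz} = Γ^ℓ_{xz} for all x, y, z. -/
import Mathlib


set_option autoImplicit false

open TensorProduct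

/-- Convolution of linear functionals on a coalgebra: `(f ∗ g)(x) = (f ⊗ g)(Δ x)`. -/
noncomputable def convF (k H : Type*) [CommRing k] [AddCommGroup H] [Module k H]
    [Coalgebra k H] (f g : H →ₗ[k] k) : H →ₗ[k] k :=
  TensorProduct.lift (((LinearMap.mul k k).comp f).compl₂ g) ∘ₗ
    Coalgebra.comul (R := k) (A := H)

/-- `Γ_g = (g ⊗ id) ∘ Δ` for a linear functional `g` on a coalgebra. -/
noncomputable def GammaF (k H : Type*) [CommRing k] [AddCommGroup H] [Module k H]
    [Coalgebra k H] (g : H →ₗ[k] k) : H →ₗ[k] H :=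
  (TensorProduct.lid k H).toLinearMap ∘ₗ TensorProduct.map g LinearMap.id ∘ₗ
    Coalgebra.comul (R := k) (A := H)

/-- `M_ℓ = (ℓ ⊗ id) ∘ ρ`, the renormalisation map attached to a coaction `ρ` and a
character `ℓ`. -/
noncomputable def Ml (k H S : Type*) [CommRing k] [AddCommGroup H] [Module k H]
    [CommRing S] [Algebra k S] (ρ : H →ₗ[k] S ⊗[k] H) (ℓ : S →ₐ[k] k) : H →ₗ[k] H :=
  (TensorProduct.lid k H).toLinearMap ∘ₗ TensorProduct.map ℓ.toLinearMap LinearMap.id ∘ₗ ρ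

lemma convF_eq (k H : Type*) [CommRing k] [AddCommGroup H] [Module k H]
    [Coalgebra k H] (f g : H →ₗ[k] k) :
    convF k H f g =
      (LinearMap.mul' k k ∘ₗ TensorProduct.map f g) ∘ₗ Coalgebra.comul (R := k) (A := H) := by
  unfold convF
  congr 1
  apply TensorProduct.ext'
  intro a b
  simp [LinearMap.mul'_apply]

lemma gamma_comp (k H : Type*) [CommRing k] [AddCommGroup H] [Module k H]
    [Coalgebra k H] (f g : H →ₗ[k] k) :
    GammaF k H f ∘ₗ GammaF k H g = GammaF k H (convF k H g f) := by
  set Δ := Coalgebra.comul (R := k) (A := H) with hΔ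
  set D : H ⊗[k] (H ⊗[k] H) →ₗ[k] H :=
    (TensorProduct.lid k H).toLinearMap ∘ₗ
      TensorProduct.map g
        ((TensorProduct.lid k H).toLinearMap ∘ₗ TensorProduct.map f LinearMap.id) with hD
  set E : (H ⊗[k] H) ⊗[k] H →ₗ[k] H :=
    (TensorProduct.lid k H).toLinearMap ∘ₗ
      TensorProduct.map (LinearMap.mul' k k ∘ₗ TensorProduct.map g f) LinearMap.id with hE
  have h1 : GammaF k H f ∘ₗ
      ((TensorProduct.lid k H).toLinearMap ∘ₗ TensorProduct.map g LinearMap.id)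
      = D ∘ₗ Δ.lTensor H := by
    apply TensorProduct.ext'
    intro a b
    simp [GammaF, D, hΔ, map_smul, TensorProduct.smul_tmul']
  have h2 : (TensorProduct.lid k H).toLinearMap ∘ₗ
        TensorProduct.map (convF k H g f) LinearMap.id
      = E ∘ₗ Δ.rTensor H := by
    apply TensorProduct.ext'
    intro a b
    simp [convF_eq, E, hΔ, LinearMap.rTensor_tmul]
  have h3 : D ∘ₗ (TensorProduct.assoc k H H H).toLinearMap = E := by
    apply TensorProduct.ext_threefold
    intro a b c
    simp [D, E, LinearMap.mul'_apply, smul_smul, mul_comm]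
  apply LinearMap.ext
  intro x
  have hg : GammaF k H g x =
      (TensorProduct.lid k H) ((TensorProduct.map g LinearMap.id) (Δ x)) := rfl
  have e1 := LinearMap.congr_fun h1 (Δ x)
  have e2 := LinearMap.congr_fun h2 (Δ x)
  have e3 := LinearMap.congr_fun h3 (Δ.rTensor H (Δ x))
  simp only [LinearMap.comp_apply, LinearEquiv.coe_coe] at e1 e2 e3
  show (GammaF k H f) ((GammaF k H g) x) = _
  rw [hg, e1]
  have e4 : (Δ.lTensor H) (Δ x) = (TensorProduct.assoc k H H H) ((Δ.rTensor H) (Δ x)) :=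
    (Coalgebra.coassoc_apply x).symm
  rw [e4, e3, ← e2]
  rfl

lemma conv_Ml (k H S : Type*) [CommRing k] [Ring H] [Bialgebra k H]
    [CommRing S] [Bialgebra k S]
    (ρ : H →ₗ[k] S ⊗[k] H)
    (hcointer : ∀ x : H,
      (TensorProduct.map (LinearMap.mul' k S) LinearMap.id)
        ((TensorProduct.tensorTensorTensorComm k S H S H)
          ((TensorProduct.map ρ ρ) (Coalgebra.comul (R := k) x)))
      = (TensorProduct.map LinearMap.id (Coalgebra.comul (R := k) (A := H))) (ρ x))
    (ℓ : S →ₐ[k] k) (f g : H →ₗ[k] k) :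
    convF k H (f ∘ₗ Ml k H S ρ ℓ) (g ∘ₗ Ml k H S ρ ℓ)
      = convF k H f g ∘ₗ Ml k H S ρ ℓ := by
  set Δ := Coalgebra.comul (R := k) (A := H) with hΔ
  set M := Ml k H S ρ ℓ with hM
  set F : S ⊗[k] H →ₗ[k] k :=
    f ∘ₗ (TensorProduct.lid k H).toLinearMap ∘ₗ TensorProduct.map ℓ.toLinearMap LinearMap.id
    with hF
  set G : S ⊗[k] H →ₗ[k] k :=
    g ∘ₗ (TensorProduct.lid k H).toLinearMap ∘ₗ TensorProduct.map ℓ.toLinearMap LinearMap.id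
    with hG
  have hFG : TensorProduct.map (f ∘ₗ M) (g ∘ₗ M)
      = TensorProduct.map F G ∘ₗ TensorProduct.map ρ ρ := by
    rw [← TensorProduct.map_comp]; rfl
  set R2 : (S ⊗[k] H) ⊗[k] (S ⊗[k] H) →ₗ[k] k :=
    LinearMap.mul' k k ∘ₗ TensorProduct.map f g ∘ₗ
      (TensorProduct.lid k (H ⊗[k] H)).toLinearMap ∘ₗ
      TensorProduct.map ℓ.toLinearMap LinearMap.id ∘ₗ
      TensorProduct.map (LinearMap.mul' k S) LinearMap.id ∘ₗ
      (TensorProduct.tensorTensorTensorComm k S H S H).toLinearMap with hR2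
  have key : LinearMap.mul' k k ∘ₗ TensorProduct.map F G = R2 := by
    apply TensorProduct.ext_fourfold'
    intro s h s' h'
    simp [F, G, R2, LinearMap.mul'_apply, TensorProduct.tensorTensorTensorComm_tmul,
      smul_tmul', map_smul, smul_eq_mul, map_mul]
    ring
  have hP : Δ ∘ₗ ((TensorProduct.lid k H).toLinearMap ∘ₗ
        TensorProduct.map ℓ.toLinearMap LinearMap.id)
      = (TensorProduct.lid k (H ⊗[k] H)).toLinearMap ∘ₗ
        TensorProduct.map ℓ.toLinearMap LinearMap.id ∘ₗ
        TensorProduct.map LinearMap.id Δ := by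
    apply TensorProduct.ext'
    intro s h
    simp [hΔ, map_smul]
  apply LinearMap.ext
  intro x
  have hl : convF k H (f ∘ₗ M) (g ∘ₗ M) x
      = (LinearMap.mul' k k) ((TensorProduct.map (f ∘ₗ M) (g ∘ₗ M)) (Δ x)) := by
    rw [convF_eq]; rfl
  have hr : (convF k H f g ∘ₗ M) x
      = (LinearMap.mul' k k) ((TensorProduct.map f g) (Δ (M x))) := by
    rw [convF_eq]; rfl
  have hΔM : Δ (M x) = (TensorProduct.lid k (H ⊗[k] H))
      ((TensorProduct.map ℓ.toLinearMap LinearMap.id)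
        ((TensorProduct.map LinearMap.id Δ) (ρ x))) := LinearMap.congr_fun hP (ρ x)
  rw [hl, hr, hΔM, ← hcointer x, hFG]
  have := LinearMap.congr_fun key ((TensorProduct.map ρ ρ) (Δ x))
  simp only [LinearMap.comp_apply, LinearEquiv.coe_coe, R2] at this ⊢
  exact this

/-- The renormalised recentering maps `Γ^ℓ_{st} := (X_{ts} ∘ M_ℓ ⊗ id)Δ` again satisfy
the group property `Γ^ℓ_{xy} Γ^ℓ_{yz} = Γ^ℓ_{xz}`, given the cointeraction of the
coaction `ρ` with the coproduct `Δ`, a character `ℓ` of the commutative bialgebra `S`,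
and Chen's identity for the characters `X_{st}` of `H`. -/
theorem stmt_10 (k H S : Type*) [CommRing k] [Ring H] [Bialgebra k H] [HopfAlgebra k H]
    [CommRing S] [Bialgebra k S]
    (ρ : H →ₗ[k] S ⊗[k] H)
    (hcoassoc : ∀ x : H, (TensorProduct.assoc k S S H)
        ((TensorProduct.map (Coalgebra.comul (R := k) (A := S)) LinearMap.id) (ρ x))
      = (TensorProduct.map LinearMap.id ρ) (ρ x))
    (hcounit : ∀ x : H, (TensorProduct.lid k H)
        ((TensorProduct.map (Coalgebra.counit (R := k) (A := S)) LinearMap.id) (ρ x)) = x)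
    (hcointer : ∀ x : H,
      (TensorProduct.map (LinearMap.mul' k S) LinearMap.id)
        ((TensorProduct.tensorTensorTensorComm k S H S H)
          ((TensorProduct.map ρ ρ) (Coalgebra.comul (R := k) x)))
      = (TensorProduct.map LinearMap.id (Coalgebra.comul (R := k) (A := H))) (ρ x))
    (ℓ : S →ₐ[k] k)
    (X : ℝ → ℝ → (H →ₐ[k] k))
    (chen : ∀ s u t : ℝ,
      convF k H (X s u).toLinearMap (X u t).toLinearMap = (X s t).toLinearMap) :
    ∀ x y z : ℝ,
      (GammaF k H ((X y x).toLinearMap ∘ₗ Ml k H S ρ ℓ)) ∘ₗ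
          (GammaF k H ((X z y).toLinearMap ∘ₗ Ml k H S ρ ℓ))
        = GammaF k H ((X z x).toLinearMap ∘ₗ Ml k H S ρ ℓ) := by
  intro x y z
  rw [gamma_comp, conv_Ml k H S ρ hcointer ℓ, chen z y x]
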